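/- For every ω > 0 and every t ≥ 0, the matrix exp(−t · A^{(p;ω)}_{(𝒥)}) is invertible and belongs to ⟨p⟩^+, i.e., it is entrywise nonnegative, its rows sum to 1, and it leaves the row vector p invariant. -/

import Mathlib

open Matrix

/-- The ratio `r_j := p_j / p_n` for `j ∈ [n-1]`, with the state space `[n]` modeled as
`Fin (m+1)`, the last state `n` as `Fin.last m`, and `[n-1]` as `Fin m` via `Fin.castSucc`. -/
noncomputable def r (m : ℕ) (p : Fin (m + 1) → ℝ) (j : Fin m) : ℝ :=
  p j.castSucc / p (Fin.last m)

/-- `e^{(p)}_{(j,k)} := (e_j − r_j e_n)(e_k^T − e_n^T)` as an `(m+1) × (m+1)` real matrix. -/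
noncomputable def Ep (m : ℕ) (p : Fin (m + 1) → ℝ) (j k : Fin m) :
    Matrix (Fin (m + 1)) (Fin (m + 1)) ℝ :=
  Matrix.vecMulVec
    (fun a => (if a = j.castSucc then (1 : ℝ) else 0) -
      r m p j * (if a = Fin.last m then (1 : ℝ) else 0))
    (fun b => (if b = k.castSucc then (1 : ℝ) else 0) - (if b = Fin.last m then (1 : ℝ) else 0))

/-- For a `d`-element subset `𝒥 = {j_1, …, j_d} ⊆ [n-1]` (given as an injective tuple
`J : Fin d → Fin m`) and a `d × d` matrix `μ`, the `n × n` matrix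
`μ^{(p)}_{(𝒥)} := Σ_{u,v} μ_{uv} e^{(p)}_{(j_u, j_v)}`. -/
noncomputable def liftJ (m d : ℕ) (p : Fin (m + 1) → ℝ) (J : Fin d → Fin m)
    (μ : Matrix (Fin d) (Fin d) ℝ) : Matrix (Fin (m + 1)) (Fin (m + 1)) ℝ :=
  ∑ u, ∑ v, μ u v • Ep m p (J u) (J v)

/-- The matrix `A^{(p;ω)}_{(𝒥)} := ω Σ_{u,v} (δ_{j_u j_v} − r_{j_v}/(1 + r_{(𝒥)} 1_d))
e^{(p)}_{(j_u, j_v)}`. -/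
noncomputable def AJ (m d : ℕ) (p : Fin (m + 1) → ℝ) (J : Fin d → Fin m) (ω : ℝ) :
    Matrix (Fin (m + 1)) (Fin (m + 1)) ℝ :=
  ω • ∑ u, ∑ v,
    ((if J u = J v then (1 : ℝ) else 0) - r m p (J v) / (1 + ∑ w, r m p (J w))) •
      Ep m p (J u) (J v)

namespace Stmt15Aux

open NormedSpace

variable {N : ℕ}

/-- `M ↦ M *ᵥ v` as a continuous linear map. -/
noncomputable def mulVecCLM (v : Fin N → ℝ) :
    Matrix (Fin N) (Fin N) ℝ →L[ℝ] (Fin N → ℝ) :=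
  LinearMap.toContinuousLinearMap
    { toFun := fun M => M.mulVec v
      map_add' := fun A B => Matrix.add_mulVec A B v
      map_smul' := fun c A => Matrix.smul_mulVec c A v }

/-- `M ↦ w ᵥ* M` as a continuous linear map. -/
noncomputable def vecMulCLM (w : Fin N → ℝ) :
    Matrix (Fin N) (Fin N) ℝ →L[ℝ] (Fin N → ℝ) :=
  LinearMap.toContinuousLinearMap
    { toFun := fun M => Matrix.vecMul w M
      map_add' := fun A B => Matrix.vecMul_add A B w
      map_smul' := fun c A => by
        ext j
        simp [Matrix.vecMul, dotProduct, Finset.mul_sum]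
        exact Finset.sum_congr rfl fun i _ => by ring }

/-- `M ↦ M a b` as a continuous linear map. -/
noncomputable def entryCLM (a b : Fin N) :
    Matrix (Fin N) (Fin N) ℝ →L[ℝ] ℝ :=
  LinearMap.toContinuousLinearMap
    { toFun := fun M => M a b
      map_add' := fun _ _ => rfl
      map_smul' := fun _ _ => rfl }

lemma clm_exp {E : Type*} [NormedAddCommGroup E] [NormedSpace ℝ E]
    (φ : Matrix (Fin N) (Fin N) ℝ →L[ℝ] E) (B : Matrix (Fin N) (Fin N) ℝ) :
    φ (exp B) = ∑' k : ℕ, (k.factorial : ℝ)⁻¹ • φ (B ^ k) := by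
  letI : SeminormedRing (Matrix (Fin N) (Fin N) ℝ) := Matrix.linftyOpSemiNormedRing
  letI : NormedRing (Matrix (Fin N) (Fin N) ℝ) := Matrix.linftyOpNormedRing
  letI : NormedAlgebra ℝ (Matrix (Fin N) (Fin N) ℝ) := Matrix.linftyOpNormedAlgebra
  rw [exp_eq_tsum ℝ, φ.map_tsum (expSeries_summable' (𝕂 := ℝ) B)]
  simp

lemma mulVec_exp (B : Matrix (Fin N) (Fin N) ℝ) (v : Fin N → ℝ)
    (h : B.mulVec v = 0) : (exp B).mulVec v = v := by
  have hpow : ∀ k : ℕ, k ≠ 0 → (B ^ k).mulVec v = 0 := by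
    intro k hk
    obtain ⟨j, rfl⟩ := Nat.exists_eq_succ_of_ne_zero hk
    rw [pow_succ, ← Matrix.mulVec_mulVec, h, Matrix.mulVec_zero]
  have : mulVecCLM v (exp B) = v := by
    rw [clm_exp]
    rw [tsum_eq_single 0 (by
      intro k hk
      have : mulVecCLM v (B ^ k) = 0 := hpow k hk
      simp [this])]
    simp [mulVecCLM]
  exact this

lemma vecMul_exp (B : Matrix (Fin N) (Fin N) ℝ) (w : Fin N → ℝ)
    (h : Matrix.vecMul w B = 0) : Matrix.vecMul w (exp B) = w := by
  have hpow : ∀ k : ℕ, k ≠ 0 → Matrix.vecMul w (B ^ k) = 0 := by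
    intro k hk
    obtain ⟨j, rfl⟩ := Nat.exists_eq_succ_of_ne_zero hk
    rw [pow_succ', ← Matrix.vecMul_vecMul, h, Matrix.zero_vecMul]
  have : vecMulCLM w (exp B) = w := by
    rw [clm_exp]
    rw [tsum_eq_single 0 (by
      intro k hk
      have : vecMulCLM w (B ^ k) = 0 := hpow k hk
      simp [this])]
    simp [vecMulCLM]
  exact this

lemma exp_entry_nonneg (B : Matrix (Fin N) (Fin N) ℝ)
    (h : ∀ a b, 0 ≤ B a b) (a b : Fin N) : 0 ≤ exp B a b := by
  have hpow : ∀ k : ℕ, ∀ a b, 0 ≤ (B ^ k) a b := by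
    intro k
    induction k with
    | zero => intro a b; by_cases hab : a = b <;> simp [pow_zero, Matrix.one_apply, hab]
    | succ j ih =>
      intro a b
      rw [pow_succ, Matrix.mul_apply]
      exact Finset.sum_nonneg fun c _ => mul_nonneg (ih a c) (h c b)
  have : (0:ℝ) ≤ entryCLM a b (exp B) := by
    rw [clm_exp]
    refine tsum_nonneg fun k => ?_
    have he : entryCLM a b (B ^ k) = (B ^ k) a b := rfl
    rw [smul_eq_mul, he]
    exact mul_nonneg (by positivity) (hpow k a b)
  exact this

lemma exp_nonneg_of_offdiag_nonneg (B : Matrix (Fin N) (Fin N) ℝ)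
    (h : ∀ a b, a ≠ b → 0 ≤ B a b) (a b : Fin N) : 0 ≤ exp B a b := by
  set c : ℝ := ∑ a, |B a a| with hc
  set Nn : Matrix (Fin N) (Fin N) ℝ := B + c • 1 with hNn
  have hN : ∀ a b, 0 ≤ Nn a b := by
    intro a' b'
    by_cases hab : a' = b'
    · subst hab
      simp only [hNn, Matrix.add_apply, Matrix.smul_apply, Matrix.one_apply_eq, smul_eq_mul,
        mul_one]
      have h1 : |B a' a'| ≤ c :=
        Finset.single_le_sum (fun x _ => abs_nonneg (B x x)) (Finset.mem_univ a')
      have h2 := neg_abs_le (B a' a')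
      linarith
    · simp only [hNn, Matrix.add_apply, Matrix.smul_apply, Matrix.one_apply_ne hab,
        smul_eq_mul, mul_zero, add_zero]
      exact h a' b' hab
  have hB : B = Nn + (-c) • (1 : Matrix (Fin N) (Fin N) ℝ) := by
    rw [hNn]; module
  have hcomm : Commute Nn ((-c) • (1 : Matrix (Fin N) (Fin N) ℝ)) :=
    (Commute.one_right Nn).smul_right _
  have hexp : exp B = exp Nn * exp ((-c) • (1 : Matrix (Fin N) (Fin N) ℝ)) := by
    rw [hB]; exact Matrix.exp_add_of_commute _ _ hcomm
  have h1 : exp ((-c) • (1 : Matrix (Fin N) (Fin N) ℝ))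
      = Real.exp (-c) • (1 : Matrix (Fin N) (Fin N) ℝ) := by
    letI : SeminormedRing (Matrix (Fin N) (Fin N) ℝ) := Matrix.linftyOpSemiNormedRing
    letI : NormedRing (Matrix (Fin N) (Fin N) ℝ) := Matrix.linftyOpNormedRing
    letI : NormedAlgebra ℝ (Matrix (Fin N) (Fin N) ℝ) := Matrix.linftyOpNormedAlgebra
    have e1 : ((-c) • (1 : Matrix (Fin N) (Fin N) ℝ))
        = algebraMap ℝ (Matrix (Fin N) (Fin N) ℝ) (-c) :=
      (Algebra.algebraMap_eq_smul_one _).symm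
    rw [e1, Real.exp_eq_exp_ℝ, ← Algebra.algebraMap_eq_smul_one]
    exact (algebraMap_exp_comm (-c)).symm
  rw [hexp, h1, mul_smul_comm, mul_one, Matrix.smul_apply, smul_eq_mul]
  exact mul_nonneg (Real.exp_nonneg _) (exp_entry_nonneg Nn hN a b)

lemma Ep_mulVec_one (m : ℕ) (p : Fin (m + 1) → ℝ) (j k : Fin m) :
    (Ep m p j k).mulVec (fun _ => (1:ℝ)) = 0 := by
  ext a
  simp [Ep, Matrix.mulVec, dotProduct, Matrix.vecMulVec_apply, ← Finset.mul_sum,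
    Finset.sum_sub_distrib]

lemma vecMul_p_Ep (m : ℕ) (p : Fin (m + 1) → ℝ) (hp : p (Fin.last m) ≠ 0) (j k : Fin m) :
    Matrix.vecMul p (Ep m p j k) = 0 := by
  ext b
  simp only [Matrix.vecMul, dotProduct, Ep, Matrix.vecMulVec_apply, Pi.zero_apply]
  rw [show (∑ x, p x *
        (((if x = j.castSucc then (1:ℝ) else 0) - r m p j * if x = Fin.last m then 1 else 0) *
          ((if b = k.castSucc then 1 else 0) - if b = Fin.last m then 1 else 0)))
      = (∑ x, p x *
        ((if x = j.castSucc then (1:ℝ) else 0) - r m p j * if x = Fin.last m then 1 else 0)) *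
          ((if b = k.castSucc then (1:ℝ) else 0) - if b = Fin.last m then 1 else 0) by
    rw [Finset.sum_mul]; exact Finset.sum_congr rfl fun x _ => by ring]
  have : ∑ a, p a * ((if a = j.castSucc then (1:ℝ) else 0) -
      r m p j * (if a = Fin.last m then (1 : ℝ) else 0)) = 0 := by
    simp only [mul_sub, Finset.sum_sub_distrib, mul_ite, mul_one, mul_zero,
      Finset.sum_ite_eq', Finset.mem_univ, if_true]
    field_simp [r]
    rw [r, mul_div_assoc', mul_div_cancel_left₀ _ hp, sub_self]
  rw [this, zero_mul]

lemma AJ_apply (m d : ℕ) (p : Fin (m + 1) → ℝ) (J : Fin d → Fin m) (ω : ℝ)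
    (a b : Fin (m + 1)) :
    AJ m d p J ω a b = ω * ∑ u, ∑ v,
      ((if J u = J v then (1:ℝ) else 0) - r m p (J v) / (1 + ∑ w, r m p (J w))) *
      (((if a = (J u).castSucc then (1:ℝ) else 0) -
          r m p (J u) * (if a = Fin.last m then (1:ℝ) else 0)) *
       ((if b = (J v).castSucc then (1:ℝ) else 0) - (if b = Fin.last m then (1:ℝ) else 0))) := by
  simp [AJ, Ep, Matrix.vecMulVec_apply, Matrix.sum_apply, Matrix.smul_apply, smul_eq_mul]

lemma AJ_offdiag_nonpos (m d : ℕ) (p : Fin (m+1) → ℝ) (hp : ∀ a, 0 < p a)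
    (J : Fin d → Fin m) (hJ : Function.Injective J) (ω : ℝ) (hω : 0 ≤ ω)
    (a b : Fin (m+1)) (hab : a ≠ b) : AJ m d p J ω a b ≤ 0 := by
  have hr : ∀ j : Fin m, 0 < r m p j := fun j => div_pos (hp _) (hp _)
  have hS0 : (0:ℝ) < 1 + ∑ w, r m p (J w) := by
    have : (0:ℝ) ≤ ∑ w, r m p (J w) := Finset.sum_nonneg fun w _ => (hr _).le
    linarith
  rw [AJ_apply]
  rcases Fin.eq_castSucc_or_eq_last a with ⟨i, rfl⟩ | rfl <;>
    rcases Fin.eq_castSucc_or_eq_last b with ⟨i', rfl⟩ | rfl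
  · -- a = i.castSucc, b = i'.castSucc
    by_cases hi : ∃ u0, J u0 = i
    · obtain ⟨u0, rfl⟩ := hi
      by_cases hi' : ∃ v0, J v0 = i'
      · obtain ⟨v0, rfl⟩ := hi'
        have huv : u0 ≠ v0 := by rintro rfl; exact hab rfl
        simp only [Fin.castSucc_inj, hJ.eq_iff, (Fin.castSucc_lt_last _).ne,
          mul_ite, ite_mul, mul_zero, zero_mul, mul_one, one_mul, if_false,
          sub_zero, Finset.sum_ite_eq, Finset.sum_ite_eq', Finset.mem_univ, if_true]
        rw [if_neg huv]
        apply mul_nonpos_of_nonneg_of_nonpos hω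
        simp only [zero_sub, neg_nonpos]
        exact div_nonneg (hr _).le hS0.le
      · push_neg at hi'
        simp only [Fin.castSucc_inj, hJ.eq_iff, (Fin.castSucc_lt_last _).ne,
          mul_ite, ite_mul, mul_zero, zero_mul, mul_one, one_mul, if_false,
          sub_zero, Finset.sum_ite_eq, Finset.sum_ite_eq', Finset.mem_univ, if_true]
        simp [fun v => Ne.symm (hi' v)]
    · push_neg at hi
      have h2 : ∀ u : Fin d, ¬ (i.castSucc = (J u).castSucc) := by
        intro u h; exact hi u (Fin.castSucc_inj.mp h).symm
      simp [h2, (Fin.castSucc_lt_last _).ne]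
  · -- a = i.castSucc, b = last
    by_cases hi : ∃ u0, J u0 = i
    · obtain ⟨u0, rfl⟩ := hi
      simp only [Fin.castSucc_inj, hJ.eq_iff, (Fin.castSucc_lt_last _).ne,
        (Fin.castSucc_lt_last _).ne',
        mul_ite, ite_mul, mul_zero, zero_mul, mul_one, one_mul, if_false, if_true,
        sub_zero, zero_sub, mul_neg, neg_neg, mul_sub, sub_mul,
        Finset.sum_ite_eq, Finset.sum_ite_eq', Finset.mem_univ,
        Finset.sum_sub_distrib, Finset.sum_neg_distrib]
      rw [Finset.sum_comm, neg_nonpos]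
      apply mul_nonneg hω
      have key : ∀ x1 : Fin d, ∑ x : Fin d, (if u0 = x then
          (if x = x1 then (1:ℝ) else 0) - r m p (J x1) / (1 + ∑ w, r m p (J w)) else 0)
          = (if u0 = x1 then (1:ℝ) else 0) - r m p (J x1) / (1 + ∑ w, r m p (J w)) := by
        intro x1
        rw [Finset.sum_ite_eq]
        simp
      rw [Finset.sum_congr rfl fun x1 _ => key x1, Finset.sum_sub_distrib]
      have h1 : (∑ x1 : Fin d, if u0 = x1 then (1:ℝ) else 0) = 1 := by simp
      rw [h1, ← Finset.sum_div, sub_nonneg, div_le_one hS0]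
      linarith
    · push_neg at hi
      have h2 : ∀ u : Fin d, ¬ (i.castSucc = (J u).castSucc) := by
        intro u h; exact hi u (Fin.castSucc_inj.mp h).symm
      simp [h2, (Fin.castSucc_lt_last _).ne]
  · -- a = last, b = i'.castSucc
    by_cases hi' : ∃ v0, J v0 = i'
    · obtain ⟨v0, rfl⟩ := hi'
      simp only [Fin.castSucc_inj, hJ.eq_iff, (Fin.castSucc_lt_last _).ne,
        (Fin.castSucc_lt_last _).ne',
        mul_ite, ite_mul, mul_zero, zero_mul, mul_one, one_mul, if_false, if_true,
        sub_zero, zero_sub, mul_neg, neg_neg, mul_sub, sub_mul,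
        Finset.sum_ite_eq, Finset.sum_ite_eq', Finset.mem_univ,
        Finset.sum_sub_distrib, Finset.sum_neg_distrib]
      rw [neg_nonpos, sub_nonneg]
      have heq : ∑ x : Fin d, r m p (J v0) / (1 + ∑ w, r m p (J w)) * r m p (J x)
          = r m p (J v0) * ((∑ w, r m p (J w)) / (1 + ∑ w, r m p (J w))) := by
        rw [← Finset.mul_sum]; ring
      rw [heq]
      have hle : (∑ w : Fin d, r m p (J w)) / (1 + ∑ w, r m p (J w)) ≤ 1 := by
        rw [div_le_one hS0]; linarith
      exact mul_le_mul_of_nonneg_left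
        (mul_le_of_le_one_right (hr _).le hle) hω
    · push_neg at hi'
      have h2 : ∀ v : Fin d, ¬ (i'.castSucc = (J v).castSucc) := by
        intro v h; exact hi' v (Fin.castSucc_inj.mp h).symm
      simp [h2, (Fin.castSucc_lt_last _).ne]
  · exact absurd rfl hab

lemma AJ_mulVec_one (m d : ℕ) (p : Fin (m + 1) → ℝ) (J : Fin d → Fin m) (ω : ℝ) :
    (AJ m d p J ω).mulVec (fun _ => (1:ℝ)) = 0 := by
  have h : ∀ u v : Fin d, mulVecCLM (fun _ => (1:ℝ)) (Ep m p (J u) (J v)) = 0 :=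
    fun u v => Ep_mulVec_one m p (J u) (J v)
  have : mulVecCLM (fun _ => (1:ℝ)) (AJ m d p J ω) = 0 := by
    simp only [AJ, _root_.map_smul, map_sum]
    simp [h]
  exact this

lemma vecMul_p_AJ (m d : ℕ) (p : Fin (m + 1) → ℝ) (hp : p (Fin.last m) ≠ 0)
    (J : Fin d → Fin m) (ω : ℝ) :
    Matrix.vecMul p (AJ m d p J ω) = 0 := by
  have h : ∀ u v : Fin d, vecMulCLM p (Ep m p (J u) (J v)) = 0 :=
    fun u v => vecMul_p_Ep m p hp (J u) (J v)
  have : vecMulCLM p (AJ m d p J ω) = 0 := by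
    simp only [AJ, _root_.map_smul, map_sum]
    simp [h]
  exact this

end Stmt15Aux

open NormedSpace in
/-- for `ω > 0` and `t ≥ 0`, `exp(−t A^{(p;ω)}_{(𝒥)})` is invertible and
lies in `⟨p⟩⁺`: entrywise nonnegative, rows summing to `1`, and leaving `p` invariant. -/
theorem stmt15 (m d : ℕ) (hm : 1 ≤ m) (hd : 1 ≤ d) (p : Fin (m + 1) → ℝ)
    (hp : ∀ a, 0 < p a) (hsum : ∑ a, p a = 1)
    (J : Fin d → Fin m) (hJ : Function.Injective J) (ω : ℝ) (hω : 0 < ω) (t : ℝ) (ht : 0 ≤ t) :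
    IsUnit (NormedSpace.exp (-(t • AJ m d p J ω))) ∧
    (∀ a b, 0 ≤ NormedSpace.exp (-(t • AJ m d p J ω)) a b) ∧
    (NormedSpace.exp (-(t • AJ m d p J ω))).mulVec (fun _ => (1 : ℝ)) = (fun _ => (1 : ℝ)) ∧
    Matrix.vecMul p (NormedSpace.exp (-(t • AJ m d p J ω))) = p := by
  have hBmul : (-(t • AJ m d p J ω)).mulVec (fun _ => (1:ℝ)) = 0 := by
    rw [Matrix.neg_mulVec, Matrix.smul_mulVec, Stmt15Aux.AJ_mulVec_one]
    simp
  have hBvec : Matrix.vecMul p (-(t • AJ m d p J ω)) = 0 := by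
    have h0 : Stmt15Aux.vecMulCLM p (AJ m d p J ω) = 0 :=
      Stmt15Aux.vecMul_p_AJ m d p (hp _).ne' J ω
    have : Stmt15Aux.vecMulCLM p (-(t • AJ m d p J ω)) = 0 := by
      rw [map_neg, _root_.map_smul, h0]; simp
    exact this
  refine ⟨Matrix.isUnit_exp _, ?_, Stmt15Aux.mulVec_exp _ _ hBmul,
    Stmt15Aux.vecMul_exp _ _ hBvec⟩
  intro a b
  apply Stmt15Aux.exp_nonneg_of_offdiag_nonneg
  intro a' b' hab
  have h1 := Stmt15Aux.AJ_offdiag_nonpos m d p hp J hJ ω hω.le a' b' hab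
  have h2 : 0 ≤ -(t * AJ m d p J ω a' b') := by nlinarith
  simpa [Matrix.neg_apply, Matrix.smul_apply] using h2
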